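/- Let (Ω, 𝒜, P) be a probability space with filtration (ℱ_t)_{t≥0}, let (Δ_t)_{t≥1} and (Δ'_t)_{t≥1} be square-integrable real random variables with Δ_t and Δ'_t ℱ_t-measurable and E[Δ_t | ℱ_{t−1}] = 0, E[Δ'_t | ℱ_{t−1}] = 0 almost surely. Fix b > 0, a nonnegative sequence (σ_t)_{t≥2}, and (γ_t)_{t≥2} in [0,1), and define Γ_1 = 1, Γ_t = ∏_{i=2}^{t}(1−γ_i), M_1 = Δ_1, M_t = Δ_t − (1−γ_t)·Δ'_t + (1−γ_t)·M_{t−1} for t ≥ 2, and the variance recursion V_1 = b², V_t = (γ_t·b + (1−γ_t)·σ_t)² + (1−γ_t)²·V_{t−1} for t ≥ 2. Assume Var(Δ_t | ℱ_{t−1}) ≤ b² almost surely for all t ≥ 1 and Var(Δ_t − Δ'_t | ℱ_{t−1}) ≤ σ_t² almost surely for all t ≥ 2. Then for all t ≥ 1: (1) Var(M_t) ≤ V_t, and (2) Γ_t² · Σ_{i=1}^{t} Var(M_i/Γ_i − M_{i−1}/Γ_{i−1} | ℱ_{i−1}) ≤ V_t almost surely, where M_0/Γ_0 := 0. -/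

import Mathlib

open MeasureTheory ProbabilityTheory Filter Topology

/-- Conditional variance of `X` given the σ-algebra `m`:
`Var(X | m) = E[(X - E[X|m])² | m]`. -/
noncomputable def condVar {Ω : Type*} {m0 : MeasurableSpace Ω}
    (μ : Measure Ω) (m : MeasurableSpace Ω) (X : Ω → ℝ) : Ω → ℝ :=
  μ[fun ω => (X ω - (μ[X|m]) ω) ^ 2 | m]

lemma condVar_ae_eq_condExp_sq {Ω : Type*} {m0 : MeasurableSpace Ω}
    {μ : Measure Ω} {m : MeasurableSpace Ω} {X : Ω → ℝ} (h : μ[X|m] =ᵐ[μ] 0) :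
    condVar μ m X =ᵐ[μ] μ[fun ω => X ω ^ 2 | m] := by
  unfold _root_.condVar
  exact condExp_congr_ae (h.mono fun ω hω => by simp [hω])

lemma condVar_nonneg {Ω : Type*} {m0 : MeasurableSpace Ω}
    {μ : Measure Ω} {m : MeasurableSpace Ω} (X : Ω → ℝ) :
    ∀ᵐ ω ∂μ, 0 ≤ condVar μ m X ω :=
  condExp_nonneg (Eventually.of_forall fun _ω => sq_nonneg _)

lemma integral_le_of_condExp_le {Ω : Type*} {m0 : MeasurableSpace Ω}
    {μ : Measure Ω} {m : MeasurableSpace Ω}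
    [IsProbabilityMeasure μ] (hm : m ≤ m0) {f : Ω → ℝ}
    (hf : Integrable f μ) {C : ℝ} (h : μ[f|m] ≤ᵐ[μ] fun _ => C) :
    ∫ ω, f ω ∂μ ≤ C := by
  rw [← integral_condExp (μ := μ) hm (f := f)]
  calc ∫ ω, (μ[f|m]) ω ∂μ ≤ ∫ _ω, C ∂μ :=
        integral_mono_ae integrable_condExp (integrable_const C) h
    _ = C := by simp

lemma condExp_sq_combo_le {Ω : Type*} {m0 : MeasurableSpace Ω}
    {μ : Measure Ω} {m : MeasurableSpace Ω} [IsProbabilityMeasure μ] (hm : m ≤ m0)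
    {X Y : Ω → ℝ} (hX : MemLp X 2 μ) (hY : MemLp Y 2 μ)
    {α β a c : ℝ} (hα : 0 ≤ α) (hβ : 0 ≤ β) (ha : 0 < a) (hc : 0 ≤ c)
    (hXb : μ[fun ω => X ω ^ 2 | m] ≤ᵐ[μ] fun _ => a ^ 2)
    (hYb : μ[fun ω => Y ω ^ 2 | m] ≤ᵐ[μ] fun _ => c ^ 2) :
    μ[fun ω => (α * X ω + β * Y ω) ^ 2 | m] ≤ᵐ[μ] fun _ => (α * a + β * c) ^ 2 := by
  have hS2 : MemLp (fun ω => α * X ω + β * Y ω) 2 μ := (hX.const_mul α).add (hY.const_mul β)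
  have hSint : Integrable (fun ω => (α * X ω + β * Y ω) ^ 2) μ := hS2.integrable_sq
  have main : ∀ c' : ℝ, c < c' →
      μ[fun ω => (α * X ω + β * Y ω) ^ 2 | m] ≤ᵐ[μ] fun _ => (α * a + β * c') ^ 2 := by
    intro c' hcc'
    have hc' : 0 < c' := lt_of_le_of_lt hc hcc'
    set p := α / a with hp
    set q := β / c' with hq
    have hp0 : 0 ≤ p := div_nonneg hα ha.le
    have hq0 : 0 ≤ q := div_nonneg hβ hc'.le
    have hw0 : 0 ≤ α * a + β * c' :=
      add_nonneg (mul_nonneg hα ha.le) (mul_nonneg hβ hc'.le)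
    have hpt : ∀ ω, (α * X ω + β * Y ω) ^ 2
        ≤ (α * a + β * c') * (p * X ω ^ 2 + q * Y ω ^ 2) := by
      intro ω
      have hrw : a * c' * ((α * a + β * c') * (p * X ω ^ 2 + q * Y ω ^ 2))
          = (α * a + β * c') * (α * c' * X ω ^ 2 + β * a * Y ω ^ 2) := by
        rw [hp, hq, div_mul_eq_mul_div, div_mul_eq_mul_div,
          div_add_div _ _ ha.ne' hc'.ne', mul_comm (a * c') _, mul_assoc,
          div_mul_cancel₀ _ (by positivity : a * c' ≠ 0)]
        ring
      have key : a * c' * ((α * X ω + β * Y ω) ^ 2)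
          ≤ a * c' * ((α * a + β * c') * (p * X ω ^ 2 + q * Y ω ^ 2)) := by
        rw [hrw]
        nlinarith [mul_nonneg (mul_nonneg hα hβ) (sq_nonneg (a * Y ω - c' * X ω))]
      exact le_of_mul_le_mul_left key (mul_pos ha hc')
    have hint2 : Integrable (fun ω => (α * a + β * c') * (p * X ω ^ 2 + q * Y ω ^ 2)) μ :=
      ((hX.integrable_sq.const_mul p).add (hY.integrable_sq.const_mul q)).const_mul _
    have h1 := condExp_mono (m := m) hSint hint2 (Eventually.of_forall hpt)
    have e1 : (fun ω => (α * a + β * c') * (p * X ω ^ 2 + q * Y ω ^ 2))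
        = (α * a + β * c') • ((p • fun ω => X ω ^ 2) + (q • fun ω => Y ω ^ 2)) := by
      funext ω; simp [smul_eq_mul]
    have h2 : μ[fun ω => (α * a + β * c') * (p * X ω ^ 2 + q * Y ω ^ 2) | m]
        =ᵐ[μ] fun ω => (α * a + β * c') *
          (p * (μ[fun ω' => X ω' ^ 2 | m]) ω + q * (μ[fun ω' => Y ω' ^ 2 | m]) ω) := by
      rw [e1]
      refine (condExp_smul _ _ _).trans ?_
      filter_upwards [condExp_add (μ := μ) (m := m)
          (hX.integrable_sq.smul p) (hY.integrable_sq.smul q),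
        condExp_smul (μ := μ) (m := m) p (fun ω => X ω ^ 2),
        condExp_smul (μ := μ) (m := m) q (fun ω => Y ω ^ 2)] with ω hadd hps hqs
      simp only [Pi.smul_apply, Pi.add_apply, smul_eq_mul] at *
      rw [hadd, hps, hqs]
    filter_upwards [h1, h2, hXb, hYb] with ω h1ω h2ω hXω hYω
    have hYω' : (μ[fun ω' => Y ω' ^ 2 | m]) ω ≤ c' ^ 2 :=
      hYω.trans (by nlinarith)
    have hstep : (μ[fun ω' => (α * X ω' + β * Y ω') ^ 2 | m]) ω
        ≤ (α * a + β * c') * (p * a ^ 2 + q * c' ^ 2) := by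
      refine h1ω.trans ?_
      rw [h2ω]
      have h3 := mul_le_mul_of_nonneg_left hXω hp0
      have h4 := mul_le_mul_of_nonneg_left hYω' hq0
      nlinarith
    have e2 : p * a ^ 2 = α * a := by
      rw [hp, sq, div_mul_eq_mul_div, mul_div_assoc, mul_div_cancel_left₀ _ ha.ne']
    have e3 : q * c' ^ 2 = β * c' := by
      rw [hq, sq, div_mul_eq_mul_div, mul_div_assoc, mul_div_cancel_left₀ _ hc'.ne']
    calc (μ[fun ω' => (α * X ω' + β * Y ω') ^ 2 | m]) ω
        ≤ (α * a + β * c') * (p * a ^ 2 + q * c' ^ 2) := hstep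
      _ = (α * a + β * c') ^ 2 := by rw [e2, e3, sq]
  have hall : ∀ᵐ ω ∂μ, ∀ n : ℕ,
      (μ[fun ω' => (α * X ω' + β * Y ω') ^ 2 | m]) ω ≤ (α * a + β * (c + 1 / (n + 1))) ^ 2 :=
    ae_all_iff.2 fun n => main (c + 1 / (n + 1)) (lt_add_of_pos_right c (by positivity))
  filter_upwards [hall] with ω hω
  have ht : Tendsto (fun n : ℕ => (α * a + β * (c + 1 / (n + 1))) ^ 2) atTop
      (𝓝 ((α * a + β * (c + 0)) ^ 2)) :=
    (tendsto_const_nhds.add ((tendsto_const_nhds.add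
      tendsto_one_div_add_atTop_nhds_zero_nat).const_mul β)).pow 2
  rw [add_zero] at ht
  exact ge_of_tendsto' ht fun n => hω n

/-- Variance recursion bound for the centered OEUVRE process: with
`V₁ = b²`, `V_t = (γ_t b + (1-γ_t) σ_t)² + (1-γ_t)² V_{t-1}`, one has
(1) `Var(M_t) ≤ V_t` and (2) `Γ_t² · Σ_{i=1}^t Var(M_i/Γ_i - M_{i-1}/Γ_{i-1} | ℱ_{i-1}) ≤ V_t`
almost surely (with the convention `M₀/Γ₀ = 0`). -/
theorem oeuvre_var_recursion
    {Ω : Type*} {m0 : MeasurableSpace Ω} {μ : Measure Ω} [IsProbabilityMeasure μ]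
    (ℱ : Filtration ℕ m0)
    (Δ Δ' : ℕ → Ω → ℝ) (γ σ : ℕ → ℝ) (b : ℝ) (hb : 0 < b)
    (hΔL2 : ∀ t ≥ 1, MemLp (Δ t) 2 μ)
    (hΔ'L2 : ∀ t ≥ 1, MemLp (Δ' t) 2 μ)
    (hΔmeas : ∀ t ≥ 1, StronglyMeasurable[ℱ t] (Δ t))
    (hΔ'meas : ∀ t ≥ 1, StronglyMeasurable[ℱ t] (Δ' t))
    (hΔcond : ∀ t ≥ 1, μ[Δ t | ℱ (t - 1)] =ᵐ[μ] 0)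
    (hΔ'cond : ∀ t ≥ 1, μ[Δ' t | ℱ (t - 1)] =ᵐ[μ] 0)
    (hσ : ∀ t ≥ 2, 0 ≤ σ t)
    (hγ : ∀ t ≥ 2, γ t ∈ Set.Ico (0 : ℝ) 1)
    (Γ : ℕ → ℝ) (hΓ : ∀ t ≥ 1, Γ t = ∏ i ∈ Finset.Icc 2 t, (1 - γ i))
    (M : ℕ → Ω → ℝ)
    (hM1 : M 1 = Δ 1)
    (hMrec : ∀ t ≥ 2, ∀ ω,
      M t ω = Δ t ω - (1 - γ t) * Δ' t ω + (1 - γ t) * M (t - 1) ω)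
    (V : ℕ → ℝ) (hV1 : V 1 = b ^ 2)
    (hVrec : ∀ t ≥ 2,
      V t = (γ t * b + (1 - γ t) * σ t) ^ 2 + (1 - γ t) ^ 2 * V (t - 1))
    (hΔvar : ∀ t ≥ 1, ∀ᵐ ω ∂μ, condVar μ (ℱ (t - 1)) (Δ t) ω ≤ b ^ 2)
    (hdiffvar : ∀ t ≥ 2, ∀ᵐ ω ∂μ,
      condVar μ (ℱ (t - 1)) (fun ω' => Δ t ω' - Δ' t ω') ω ≤ σ t ^ 2) :
    ∀ t ≥ 1,
      variance (M t) μ ≤ V t ∧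
      (∀ᵐ ω ∂μ, (Γ t) ^ 2 *
        (∑ i ∈ Finset.Icc 1 t,
          condVar μ (ℱ (i - 1))
            (fun ω' => M i ω' / Γ i -
              (if i = 1 then 0 else M (i - 1) ω' / Γ (i - 1))) ω) ≤ V t) := by
  classical
  set X : ℕ → Ω → ℝ := fun t ω => Δ t ω - (1 - γ t) * Δ' t ω with hXdef
  -- basic facts on γ and Γ
  have hγpos : ∀ t ≥ 2, 0 < 1 - γ t := fun t ht => by linarith [(hγ t ht).2]
  have hγ0 : ∀ t ≥ 2, 0 ≤ γ t := fun t ht => (hγ t ht).1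
  have hΓ1 : Γ 1 = 1 := by
    rw [hΓ 1 le_rfl, Finset.Icc_eq_empty (by omega), Finset.prod_empty]
  have hΓrec : ∀ t ≥ 2, Γ t = (1 - γ t) * Γ (t - 1) := by
    intro t ht
    obtain ⟨n, rfl⟩ : ∃ n, t = n + 1 := ⟨t - 1, by omega⟩
    rw [hΓ _ (by omega), hΓ _ (by omega)]
    simp only [Nat.add_sub_cancel]
    rw [Finset.prod_Icc_succ_top (by omega : 2 ≤ n + 1)]
    ring
  have hΓpos : ∀ t ≥ 1, 0 < Γ t := by
    intro t ht
    rw [hΓ t ht]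
    exact Finset.prod_pos fun i hi => hγpos i (Finset.mem_Icc.1 hi).1
  -- L² membership of M
  have hML2 : ∀ t ≥ 1, MemLp (M t) 2 μ := by
    intro t ht
    induction t, ht using Nat.le_induction with
    | base => rw [hM1]; exact hΔL2 1 le_rfl
    | succ n hn ih =>
      have hMeq : M (n + 1) = fun ω =>
          Δ (n + 1) ω - (1 - γ (n + 1)) * Δ' (n + 1) ω + (1 - γ (n + 1)) * M n ω := by
        funext ω
        have := hMrec (n + 1) (by omega) ω
        simpa using this
      rw [hMeq]
      exact ((hΔL2 _ (by omega)).sub ((hΔ'L2 _ (by omega)).const_mul _)).add (ih.const_mul _)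
  -- measurability of M
  have hMmeas : ∀ t ≥ 1, StronglyMeasurable[ℱ t] (M t) := by
    intro t ht
    induction t, ht using Nat.le_induction with
    | base => rw [hM1]; exact hΔmeas 1 le_rfl
    | succ n hn ih =>
      have hMeq : M (n + 1) = fun ω =>
          Δ (n + 1) ω - (1 - γ (n + 1)) * Δ' (n + 1) ω + (1 - γ (n + 1)) * M n ω := by
        funext ω
        have := hMrec (n + 1) (by omega) ω
        simpa using this
      rw [hMeq]
      exact ((hΔmeas _ (by omega)).sub ((hΔ'meas _ (by omega)).const_mul _)).add
        ((ih.mono (ℱ.mono (Nat.le_succ n))).const_mul _)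
  -- L² and conditional mean zero of X
  have hXL2 : ∀ t ≥ 2, MemLp (X t) 2 μ := fun t ht =>
    (hΔL2 t (by omega)).sub ((hΔ'L2 t (by omega)).const_mul _)
  have hXcond : ∀ t ≥ 2, μ[X t | ℱ (t - 1)] =ᵐ[μ] 0 := by
    intro t ht
    have h1 : X t = Δ t - (1 - γ t) • Δ' t := by
      funext ω; simp [hXdef, smul_eq_mul]
    rw [h1]
    refine (condExp_sub ((hΔL2 t (by omega)).integrable one_le_two)
      (((hΔ'L2 t (by omega)).integrable one_le_two).smul _) _).trans ?_
    filter_upwards [hΔcond t (by omega),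
      condExp_smul (μ := μ) (m := ℱ (t - 1)) ((1 : ℝ) - γ t) (Δ' t),
      hΔ'cond t (by omega)] with ω h1 h2 h3
    simp only [Pi.sub_apply, Pi.smul_apply, Pi.zero_apply, smul_eq_mul] at *
    rw [h1, h2, h3]
    ring
  -- conditional second-moment bounds
  have hΔsq : ∀ t ≥ 1, μ[fun ω => Δ t ω ^ 2 | ℱ (t - 1)] ≤ᵐ[μ] fun _ => b ^ 2 := by
    intro t ht
    filter_upwards [hΔvar t ht, condVar_ae_eq_condExp_sq (hΔcond t ht)] with ω h1 h2
    rw [← h2]; exact h1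
  have hdiffcond : ∀ t ≥ 2, μ[fun ω' => Δ t ω' - Δ' t ω' | ℱ (t - 1)] =ᵐ[μ] 0 := by
    intro t ht
    rw [show (fun ω' => Δ t ω' - Δ' t ω') = Δ t - Δ' t from rfl]
    refine (condExp_sub ((hΔL2 t (by omega)).integrable one_le_two)
      ((hΔ'L2 t (by omega)).integrable one_le_two) _).trans ?_
    filter_upwards [hΔcond t (by omega), hΔ'cond t (by omega)] with ω h1 h2
    simp only [Pi.sub_apply, Pi.zero_apply] at *
    rw [h1, h2]; ring
  have hdiffsq : ∀ t ≥ 2,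
      μ[fun ω => (Δ t ω - Δ' t ω) ^ 2 | ℱ (t - 1)] ≤ᵐ[μ] fun _ => σ t ^ 2 := by
    intro t ht
    filter_upwards [hdiffvar t ht, condVar_ae_eq_condExp_sq (hdiffcond t ht)] with ω h1 h2
    rw [← h2]; exact h1
  -- the key conditional bound for X
  have hXsq : ∀ t ≥ 2, μ[fun ω => X t ω ^ 2 | ℱ (t - 1)] ≤ᵐ[μ]
      fun _ => (γ t * b + (1 - γ t) * σ t) ^ 2 := by
    intro t ht
    have hrw : (fun ω => X t ω ^ 2)
        = fun ω => (γ t * Δ t ω + (1 - γ t) * (Δ t ω - Δ' t ω)) ^ 2 := by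
      funext ω; simp only [hXdef]; ring
    rw [hrw]
    exact condExp_sq_combo_le (ℱ.le (t - 1)) (hΔL2 t (by omega))
      ((hΔL2 t (by omega)).sub (hΔ'L2 t (by omega))) (hγ0 t ht)
      (hγpos t ht).le hb (hσ t ht) (hΔsq t (by omega)) (hdiffsq t ht)
  -- integrals
  have hintΔ : ∀ t ≥ 1, ∫ ω, Δ t ω ∂μ = 0 := by
    intro t ht
    rw [← integral_condExp (μ := μ) (ℱ.le (t - 1)) (f := Δ t),
      integral_congr_ae (hΔcond t ht)]
    simp
  have hintΔ' : ∀ t ≥ 1, ∫ ω, Δ' t ω ∂μ = 0 := by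
    intro t ht
    rw [← integral_condExp (μ := μ) (ℱ.le (t - 1)) (f := Δ' t),
      integral_congr_ae (hΔ'cond t ht)]
    simp
  have hintM : ∀ t ≥ 1, ∫ ω, M t ω ∂μ = 0 := by
    intro t ht
    induction t, ht using Nat.le_induction with
    | base => rw [hM1]; exact hintΔ 1 le_rfl
    | succ n hn ih =>
      have hMeq : M (n + 1) = fun ω =>
          Δ (n + 1) ω - (1 - γ (n + 1)) * Δ' (n + 1) ω + (1 - γ (n + 1)) * M n ω := by
        funext ω
        have := hMrec (n + 1) (by omega) ω
        simpa using this
      have hIΔ : Integrable (Δ (n + 1)) μ := (hΔL2 (n + 1) (by omega)).integrable one_le_two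
      have hIΔ' : Integrable (fun ω => (1 - γ (n + 1)) * Δ' (n + 1) ω) μ :=
        ((hΔ'L2 (n + 1) (by omega)).integrable one_le_two).const_mul _
      have hIM : Integrable (fun ω => (1 - γ (n + 1)) * M n ω) μ :=
        ((hML2 n hn).integrable one_le_two).const_mul _
      calc ∫ ω, M (n + 1) ω ∂μ
          = ∫ ω, (Δ (n + 1) ω - (1 - γ (n + 1)) * Δ' (n + 1) ω
              + (1 - γ (n + 1)) * M n ω) ∂μ :=
            integral_congr_ae (Eventually.of_forall fun ω => hMrec (n + 1) (by omega) ω)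
        _ = 0 := by
            have hIΔsub : Integrable (fun ω => Δ (n + 1) ω
                - (1 - γ (n + 1)) * Δ' (n + 1) ω) μ := hIΔ.sub hIΔ'
            rw [integral_add hIΔsub hIM, integral_sub hIΔ hIΔ',
              integral_const_mul, integral_const_mul, hintΔ (n + 1) (by omega),
              hintΔ' (n + 1) (by omega), ih]
            ring
  -- integrability of products
  have hMXint : ∀ t ≥ 2, Integrable (fun ω => M (t - 1) ω * X t ω) μ := by
    intro t ht
    have h2 : MemLp (M (t - 1) • X t) 1 μ :=
      MemLp.smul (hXL2 t ht) (hML2 (t - 1) (by omega))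
        (hpqr := ⟨by simp [ENNReal.inv_two_add_inv_two]⟩)
    exact h2.integrable le_rfl
  -- cross term vanishes
  have hcross : ∀ t ≥ 2, ∫ ω, M (t - 1) ω * X t ω ∂μ = 0 := by
    intro t ht
    have hMt : StronglyMeasurable[ℱ (t - 1)] (M (t - 1)) := hMmeas (t - 1) (by omega)
    have hpull := condExp_mul_of_stronglyMeasurable_left (μ := μ) hMt
      (hMXint t ht) ((hXL2 t ht).integrable one_le_two)
    have hzero : μ[M (t - 1) * X t | ℱ (t - 1)] =ᵐ[μ] 0 := by
      refine hpull.trans ?_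
      filter_upwards [hXcond t ht] with ω h1
      simp only [Pi.mul_apply, Pi.zero_apply] at *
      rw [h1]; ring
    rw [show (fun ω => M (t - 1) ω * X t ω) = M (t - 1) * X t from rfl,
      ← integral_condExp (μ := μ) (ℱ.le (t - 1)) (f := M (t - 1) * X t),
      integral_congr_ae hzero]
    simp
  -- second moment bounds
  have hXsqint : ∀ t ≥ 2, ∫ ω, X t ω ^ 2 ∂μ ≤ (γ t * b + (1 - γ t) * σ t) ^ 2 :=
    fun t ht => integral_le_of_condExp_le (ℱ.le (t - 1)) (hXL2 t ht).integrable_sq (hXsq t ht)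
  have hΔ1sq : ∫ ω, Δ 1 ω ^ 2 ∂μ ≤ b ^ 2 :=
    integral_le_of_condExp_le (ℱ.le 0) (hΔL2 1 le_rfl).integrable_sq (hΔsq 1 le_rfl)
  -- part (1): second moment recursion
  have hVar : ∀ t ≥ 1, ∫ ω, M t ω ^ 2 ∂μ ≤ V t := by
    intro t ht
    induction t, ht using Nat.le_induction with
    | base => rw [hM1, hV1]; exact hΔ1sq
    | succ n hn ih =>
      have hMeq : ∀ ω, M (n + 1) ω = X (n + 1) ω + (1 - γ (n + 1)) * M n ω := by
        intro ω
        have := hMrec (n + 1) (by omega) ω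
        simpa [hXdef] using this
      have hexp : ∀ ω, M (n + 1) ω ^ 2 = X (n + 1) ω ^ 2
          + (2 * (1 - γ (n + 1))) * (M n ω * X (n + 1) ω)
          + (1 - γ (n + 1)) ^ 2 * M n ω ^ 2 := by
        intro ω; rw [hMeq ω]; ring
      have hIX2 : Integrable (fun ω => X (n + 1) ω ^ 2) μ := (hXL2 _ (by omega)).integrable_sq
      have hIMX : Integrable (fun ω => M n ω * X (n + 1) ω) μ := by
        have := hMXint (n + 1) (by omega); simpa using this
      have hIM2 : Integrable (fun ω => M n ω ^ 2) μ := (hML2 n hn).integrable_sq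
      calc ∫ ω, M (n + 1) ω ^ 2 ∂μ
          = ∫ ω, (X (n + 1) ω ^ 2
            + (2 * (1 - γ (n + 1))) * (M n ω * X (n + 1) ω)
            + (1 - γ (n + 1)) ^ 2 * M n ω ^ 2) ∂μ := by
            exact integral_congr_ae (Eventually.of_forall fun ω => hexp ω)
        _ = ∫ ω, X (n + 1) ω ^ 2 ∂μ
            + (2 * (1 - γ (n + 1))) * ∫ ω, M n ω * X (n + 1) ω ∂μ
            + (1 - γ (n + 1)) ^ 2 * ∫ ω, M n ω ^ 2 ∂μ := by
            have hI1 : Integrable (fun ω => X (n + 1) ω ^ 2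
                + (2 * (1 - γ (n + 1))) * (M n ω * X (n + 1) ω)) μ :=
              hIX2.add (hIMX.const_mul _)
            rw [integral_add hI1 (hIM2.const_mul _),
              integral_add hIX2 (hIMX.const_mul _), integral_const_mul, integral_const_mul]
        _ ≤ (γ (n + 1) * b + (1 - γ (n + 1)) * σ (n + 1)) ^ 2
            + (1 - γ (n + 1)) ^ 2 * V n := by
            have h1 := hXsqint (n + 1) (by omega)
            have h2 : ∫ ω, M n ω * X (n + 1) ω ∂μ = 0 := by
              have := hcross (n + 1) (by omega); simpa using this
            have h3 := mul_le_mul_of_nonneg_left ih (sq_nonneg (1 - γ (n + 1)))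
            rw [h2]
            linarith
        _ = V (n + 1) := by
            rw [hVrec (n + 1) (by omega)]; simp
  -- part (2) terms
  have hDeq : ∀ i ≥ 2, (fun ω' => M i ω' / Γ i -
      (if i = 1 then 0 else M (i - 1) ω' / Γ (i - 1))) = fun ω' => (Γ i)⁻¹ * X i ω' := by
    intro i hi
    funext ω
    rw [if_neg (by omega)]
    have h1 := hMrec i hi ω
    have h2 := hΓrec i hi
    have hΓi1 : Γ (i - 1) ≠ 0 := (hΓpos (i - 1) (by omega)).ne'
    have hci : (1 : ℝ) - γ i ≠ 0 := (hγpos i hi).ne'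
    rw [h1, h2]
    simp only [hXdef]
    field_simp
    ring
  have hterm : ∀ i ≥ 2, ∀ᵐ ω ∂μ, Γ i ^ 2 *
      condVar μ (ℱ (i - 1)) (fun ω' => M i ω' / Γ i -
        (if i = 1 then 0 else M (i - 1) ω' / Γ (i - 1))) ω
      ≤ (γ i * b + (1 - γ i) * σ i) ^ 2 := by
    intro i hi
    rw [hDeq i hi]
    have hΓi : Γ i ≠ 0 := (hΓpos i (by omega)).ne'
    have hsm : (fun ω' => (Γ i)⁻¹ * X i ω') = (Γ i)⁻¹ • X i := by
      funext ω; simp [smul_eq_mul]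
    have hDcond : μ[fun ω' => (Γ i)⁻¹ * X i ω' | ℱ (i - 1)] =ᵐ[μ] 0 := by
      rw [hsm]
      filter_upwards [condExp_smul (μ := μ) (m := ℱ (i - 1)) ((Γ i)⁻¹) (X i),
        hXcond i hi] with ω h1 h2
      simp only [Pi.smul_apply, Pi.zero_apply, smul_eq_mul] at *
      rw [h1, h2]; ring
    have hsq : (fun ω => ((Γ i)⁻¹ * X i ω) ^ 2)
        = ((Γ i)⁻¹ ^ 2) • fun ω => X i ω ^ 2 := by
      funext ω; simp [smul_eq_mul, mul_pow]
    have h1 := condVar_ae_eq_condExp_sq hDcond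
    filter_upwards [h1,
      condExp_smul (μ := μ) (m := ℱ (i - 1)) (((Γ i)⁻¹) ^ 2) (fun ω => X i ω ^ 2),
      hXsq i hi] with ω h1ω h2ω h3ω
    have e0 : (fun ω' => ((Γ i)⁻¹ * X i ω') ^ 2) = (fun ω' => (X i ω') ^ 2 * ((Γ i)⁻¹) ^2) := by
      funext ω'; ring
    rw [hsq] at h1ω
    rw [h1ω]
    simp only [Pi.smul_apply, smul_eq_mul] at h2ω
    rw [h2ω]
    have hcancel : Γ i ^ 2 * ((Γ i)⁻¹ ^ 2 * (μ[fun ω => X i ω ^ 2|ℱ (i - 1)]) ω)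
        = (μ[fun ω => X i ω ^ 2|ℱ (i - 1)]) ω := by
      rw [← mul_assoc, ← mul_pow, mul_inv_cancel₀ hΓi, one_pow, one_mul]
    rw [hcancel]
    exact h3ω
  have h2main : ∀ t ≥ 1, ∀ᵐ ω ∂μ, (Γ t) ^ 2 *
      (∑ i ∈ Finset.Icc 1 t,
        condVar μ (ℱ (i - 1))
          (fun ω' => M i ω' / Γ i -
            (if i = 1 then 0 else M (i - 1) ω' / Γ (i - 1))) ω) ≤ V t := by
    intro t ht
    induction t, ht using Nat.le_induction with
    | base =>
      have hD1 : (fun ω' => M 1 ω' / Γ 1 -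
          (if (1 : ℕ) = 1 then (0 : ℝ) else M (1 - 1) ω' / Γ (1 - 1))) = Δ 1 := by
        funext ω
        rw [if_pos rfl, hΓ1, hM1, div_one, sub_zero]
      filter_upwards [hΔvar 1 le_rfl] with ω hω
      rw [Finset.Icc_self, Finset.sum_singleton, hD1, hΓ1, one_pow, one_mul, hV1]
      exact hω
    | succ n hn ih =>
      filter_upwards [ih, hterm (n + 1) (by omega)] with ω hihω htω
      rw [Finset.sum_Icc_succ_top (by omega : 1 ≤ n + 1)]
      rw [hVrec (n + 1) (by omega)]
      have hg := hΓrec (n + 1) (by omega)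
      simp only [Nat.add_sub_cancel] at hg htω ⊢
      have hid : Γ (n + 1) ^ 2 * ((∑ i ∈ Finset.Icc 1 n,
            condVar μ (ℱ (i - 1))
              (fun ω' => M i ω' / Γ i -
                (if i = 1 then 0 else M (i - 1) ω' / Γ (i - 1))) ω)
            + condVar μ (ℱ n)
              (fun ω' => M (n + 1) ω' / Γ (n + 1) -
                (if n + 1 = 1 then 0 else M n ω' / Γ n)) ω)
          = Γ (n + 1) ^ 2 * condVar μ (ℱ n)
              (fun ω' => M (n + 1) ω' / Γ (n + 1) -
                (if n + 1 = 1 then 0 else M n ω' / Γ n)) ω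
            + (1 - γ (n + 1)) ^ 2 * (Γ n ^ 2 * (∑ i ∈ Finset.Icc 1 n,
              condVar μ (ℱ (i - 1))
                (fun ω' => M i ω' / Γ i -
                  (if i = 1 then 0 else M (i - 1) ω' / Γ (i - 1))) ω)) := by
        rw [hg]; ring
      rw [hid]
      have h2 := mul_le_mul_of_nonneg_left hihω (sq_nonneg (1 - γ (n + 1)))
      linarith
  intro t ht
  refine ⟨?_, h2main t ht⟩
  rw [variance_eq_sub (hML2 t ht)]
  have hm0 : (∫ ω, M t ω ∂μ) = 0 := hintM t ht
  have : μ[M t] = 0 := hm0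
  rw [this]
  simp only [Pi.pow_apply]
  have := hVar t ht
  simpa using this
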